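/- Let Z be a non-degenerate multimatroid with total order ≺ on its skew classes. Then the weighted transition polynomial satisfies Q(Z; x, t) = Σ_{B ∈ B(Z)} (∏_{ω inactive w.r.t. B} x_{B_ω}) · (∏_{ω active w.r.t. B} ( t·x_{B̲_ω}/(|ω|−1) + x_{B_ω} )). -/

import Mathlib

open Finset
open scoped Classical

variable {U ι : Type}

section Defs
variable [DecidableEq U] [Fintype U] [DecidableEq ι] [Fintype ι]

/-- `S` is a subtransversal: it meets each skew class at most once.
Skew classes are the fibers of `cls : U → ι`. -/
def Subtransversal (cls : U → ι) (S : Finset U) : Prop :=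
  Set.InjOn cls ↑S

/-- The skew class with index `i`, as a finset. -/
def skewClass (cls : U → ι) (i : ι) : Finset U :=
  Finset.univ.filter (fun x => cls x = i)

/-- `T` is a transversal: it meets each skew class exactly once. -/
def Transversal (cls : U → ι) (T : Finset U) : Prop :=
  Subtransversal cls T ∧ ∀ i : ι, ∃ x ∈ T, cls x = i

/-- The multimatroid rank axioms for a rank function `r` on the carrier given by
`cls : U → ι` (whose fibers, assumed nonempty, are the skew classes).
The first three fields express axiom (R1) (each transversal carries a matroid),
and `axiomR2` is axiom (R2). -/
structure IsMultimatroid (cls : U → ι) (r : Finset U → ℕ) : Prop where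
  cls_surj : Function.Surjective cls
  rank_le_card : ∀ S, Subtransversal cls S → r S ≤ S.card
  mono : ∀ S T, Subtransversal cls T → S ⊆ T → r S ≤ r T
  submod : ∀ S T, Subtransversal cls (S ∪ T) → r (S ∪ T) + r (S ∩ T) ≤ r S + r T
  axiomR2 : ∀ S, ∀ x y : U, Subtransversal cls S → cls x = cls y → x ≠ y →
    (∀ u ∈ S, cls u ≠ cls x) →
    2 * r S + 1 ≤ r (insert x S) + r (insert y S)

/-- An independent set of the multimatroid. -/
def Indep (cls : U → ι) (r : Finset U → ℕ) (S : Finset U) : Prop :=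
  Subtransversal cls S ∧ r S = S.card

/-- A basis: a maximal independent subtransversal. -/
def MMBasis (cls : U → ι) (r : Finset U → ℕ) (B : Finset U) : Prop :=
  Indep cls r B ∧ ∀ S, Indep cls r S → B ⊆ S → S = B

/-- A circuit: a minimal dependent subtransversal. -/
def Circuit (cls : U → ι) (r : Finset U → ℕ) (C : Finset U) : Prop :=
  Subtransversal cls C ∧ r C < C.card ∧ ∀ D ⊂ C, ¬ r D < D.card

/-- Non-degenerate: every skew class has at least two elements. -/
def Nondegenerate (cls : U → ι) : Prop :=
  ∀ i : ι, 2 ≤ (skewClass cls i).card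

/-- An element is singular if its singleton has rank `0`. -/
def Singular (r : Finset U → ℕ) (e : U) : Prop := r {e} = 0

end Defs

section Order
variable [DecidableEq U] [Fintype U] [DecidableEq ι] [Fintype ι] [LinearOrder ι]

/-- The skew class `i` is active with respect to the transversal `T` (in
particular, with respect to a basis): there is a circuit `C` with
`C − ω_i ⊆ T` whose `≺`-least element lies in the class `i`. -/
def Active (cls : U → ι) (r : Finset U → ℕ) (T : Finset U) (i : ι) : Prop :=
  ∃ C, Circuit cls r C ∧ C \ skewClass cls i ⊆ T ∧
    ∃ m ∈ C, cls m = i ∧ ∀ x ∈ C, i ≤ cls x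

end Order

/-- For a basis `B` and active skew class `i`, the element `B̲_ω`: the unique element
of the fundamental circuit `C(B,ω)` outside `B` (with default value `d` when the
fundamental circuit does not exist). -/
noncomputable def underElt [DecidableEq U] [Fintype U] [DecidableEq ι] [Fintype ι]
    (cls : U → ι) (r : Finset U → ℕ) (B : Finset U) (i : ι) (d : U) : U :=
  if h : ∃ x : U, ∃ C, Circuit cls r C ∧ C ⊆ B ∪ skewClass cls i ∧ x ∈ C ∧ x ∉ B
  then h.choose else d

namespace Work
variable [DecidableEq U] [Fintype U] [DecidableEq ι] [Fintype ι]

/-- `S` is a subtransversal all of whose classes lie in `J`. -/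
def InJ (cls : U → ι) (J : Finset ι) (S : Finset U) : Prop :=
  Subtransversal cls S ∧ ∀ u ∈ S, cls u ∈ J

/-- `T` is a transversal of the classes in `J`. -/
def PTrans (cls : U → ι) (J : Finset ι) (T : Finset U) : Prop :=
  InJ cls J T ∧ ∀ i ∈ J, ∃ u ∈ T, cls u = i

/-- Relative rank. -/
def RRank (r : Finset U → ℕ) (F S : Finset U) : ℕ := r (S ∪ F) - r F

def RIndep (r : Finset U → ℕ) (F S : Finset U) : Prop := RRank r F S = S.card
def RDep (r : Finset U → ℕ) (F S : Finset U) : Prop := RRank r F S < S.card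

/-- Relative basis (as a `def`, so `filter` gets a uniform classical instance). -/
def RBasis (cls : U → ι) (r : Finset U → ℕ) (J : Finset ι) (F B : Finset U) : Prop :=
  PTrans cls J B ∧ RIndep r F B

/-- The predicate describing the pieces of a basis split at the top class. -/
def RBasisV (cls : U → ι) (r : Finset U → ℕ) (J' : Finset ι) (F : Finset U) (v : U)
    (B' : Finset U) : Prop :=
  RRank r F {v} = 1 ∧ PTrans cls J' B' ∧ RIndep r (insert v F) B'

/-- Context: `F` is a transversal of the classes outside `J`. -/
structure Ctx (cls : U → ι) (J : Finset ι) (F : Finset U) : Prop where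
  sub : Subtransversal cls F
  notin : ∀ u ∈ F, cls u ∉ J
  covers : ∀ i ∉ J, ∃ u ∈ F, cls u = i

variable {cls : U → ι} {r : Finset U → ℕ} {J : Finset ι} {F : Finset U}

lemma subtrans_subset {S T : Finset U} (hT : Subtransversal cls T) (h : S ⊆ T) :
    Subtransversal cls S := hT.mono (by exact_mod_cast h)

lemma InJ.subset {S T : Finset U} (hT : InJ cls J T) (h : S ⊆ T) : InJ cls J S :=
  ⟨subtrans_subset hT.1 h, fun u hu => hT.2 u (h hu)⟩

lemma Ctx.disj (hF : Ctx cls J F) {S : Finset U} (hS : InJ cls J S) : ∀ u ∈ S, u ∉ F :=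
  fun u hu huF => hF.notin u huF (hS.2 u hu)

lemma Ctx.union_sub (hF : Ctx cls J F) {S : Finset U} (hS : InJ cls J S) :
    Subtransversal cls (S ∪ F) := by
  intro a ha b hb hab
  simp only [coe_union, Set.mem_union, mem_coe] at ha hb
  rcases ha with ha | ha <;> rcases hb with hb | hb
  · exact hS.1 ha hb hab
  · exact absurd (hab ▸ hS.2 a ha) (hF.notin b hb)
  · exact absurd (hab ▸ hF.notin a ha) (fun h => h (hS.2 b hb))
  · exact hF.sub ha hb hab

lemma Ctx.inter_empty (hF : Ctx cls J F) {S : Finset U} (hS : InJ cls J S) : S ∩ F = ∅ := by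
  ext u; simp only [mem_inter, notMem_empty, iff_false, not_and]
  exact fun hu => hF.disj hS u hu

lemma r_empty (hM : IsMultimatroid cls r) : r ∅ = 0 := by
  have := hM.rank_le_card ∅ (by intro a ha; simp at ha)
  simpa using this

lemma r_union_le (hM : IsMultimatroid cls r) (S : Finset U) (D : Finset U)
    (h : Subtransversal cls (S ∪ D)) : r (S ∪ D) ≤ r S + D.card := by
  induction D using Finset.induction_on with
  | empty => simp
  | @insert a D ha ih =>
    by_cases haS : a ∈ S ∪ D
    · have : S ∪ insert a D = S ∪ D := by
        ext b; simp only [mem_union, mem_insert]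
        constructor
        · rintro (h | rfl | h)
          · exact Or.inl h
          · simpa using haS
          · exact Or.inr h
        · rintro (h | h); exacts [Or.inl h, Or.inr (Or.inr h)]
      rw [this] at h ⊢
      refine (ih h).trans ?_
      have : D.card ≤ (insert a D).card := card_le_card (subset_insert _ _)
      omega
    · have hset : S ∪ insert a D = insert a (S ∪ D) := by
        ext b; simp only [mem_union, mem_insert]; tauto
      rw [hset] at h ⊢
      have hsub : Subtransversal cls (S ∪ D) := subtrans_subset h (subset_insert _ _)
      have e : (S ∪ D) ∪ {a} = insert a (S ∪ D) := by rw [union_comm, ← insert_eq]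
      have h1 : r (insert a (S ∪ D)) + r ((S ∪ D) ∩ {a}) ≤ r (S ∪ D) + r {a} := by
        have := hM.submod (S ∪ D) {a} (by rw [e]; exact h)
        rwa [e] at this
      have h2 : r {a} ≤ 1 := by
        have := hM.rank_le_card {a} (subtrans_subset h (by simp))
        simpa using this
      have h3 := ih hsub
      have h4 : (insert a D).card = D.card + 1 := card_insert_of_notMem ha
      omega

lemma r_insert_le (hM : IsMultimatroid cls r) (S : Finset U) (a : U)
    (h : Subtransversal cls (insert a S)) : r (insert a S) ≤ r S + 1 := by
  have e : S ∪ {a} = insert a S := by rw [union_comm, ← insert_eq]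
  have := r_union_le hM S {a} (by rw [e]; exact h)
  rw [e] at this
  refine this.trans ?_
  simp


section RRankFacts
lemma subtrans_insert {S : Finset U} {v : U} (hS : Subtransversal cls S)
    (hv : ∀ u ∈ S, cls u ≠ cls v) : Subtransversal cls (insert v S) := by
  intro a ha b hb hab
  simp only [coe_insert, Set.mem_insert_iff, mem_coe] at ha hb
  rcases ha with rfl | ha <;> rcases hb with rfl | hb
  · rfl
  · exact absurd hab.symm (hv b hb)
  · exact absurd hab (hv a ha)
  · exact hS ha hb hab

lemma InJ.insert {S : Finset U} {v : U} (hS : InJ cls J S) (hvJ : cls v ∈ J)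
    (hv : ∀ u ∈ S, cls u ≠ cls v) : InJ cls J (insert v S) := by
  refine ⟨subtrans_insert hS.1 hv, ?_⟩
  intro u hu
  rcases mem_insert.mp hu with rfl | hu
  · exact hvJ
  · exact hS.2 u hu

variable (hM : IsMultimatroid cls r) (hF : Ctx cls J F)
include hM hF

lemma rF_le_union {S : Finset U} (hS : InJ cls J S) : r F ≤ r (S ∪ F) :=
  hM.mono F (S ∪ F) (hF.union_sub hS) (subset_union_right)

lemma RRank_add {S : Finset U} (hS : InJ cls J S) : r (S ∪ F) = r F + RRank r F S := by
  have := rF_le_union hM hF hS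
  unfold RRank; omega

lemma RRank_le_card {S : Finset U} (hS : InJ cls J S) : RRank r F S ≤ S.card := by
  have h1 : r (F ∪ S) ≤ r F + S.card := by
    refine r_union_le hM F S ?_
    rw [union_comm]; exact hF.union_sub hS
  rw [union_comm] at h1
  unfold RRank; omega

lemma RRank_empty : RRank r F (∅ : Finset U) = 0 := by
  unfold RRank; rw [empty_union]; omega

lemma RRank_mono {S S' : Finset U} (hS' : InJ cls J S') (h : S ⊆ S') :
    RRank r F S ≤ RRank r F S' := by
  have h1 : r (S ∪ F) ≤ r (S' ∪ F) :=
    hM.mono _ _ (hF.union_sub hS') (union_subset_union_left h)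
  unfold RRank; omega

lemma RIndep.subset_rel {S S' : Finset U} (hS' : InJ cls J S') (h : S ⊆ S')
    (hind : RIndep r F S') : RIndep r F S := by
  have hS : InJ cls J S := hS'.subset h
  have h1 : r (S' ∪ F) = r F + S'.card := by
    have := RRank_add hM hF hS'; rw [hind] at this; omega
  have h2 : (S ∪ F) ∪ (S' \ S) = S' ∪ F := by
    ext u; simp only [mem_union, mem_sdiff]
    constructor
    · rintro ((h' | h') | ⟨h', _⟩)
      · exact Or.inl (h h')
      · exact Or.inr h'
      · exact Or.inl h'
    · rintro (h' | h')
      · by_cases hu : u ∈ S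
        · exact Or.inl (Or.inl hu)
        · exact Or.inr ⟨h', hu⟩
      · exact Or.inl (Or.inr h')
  have h3 : r (S' ∪ F) ≤ r (S ∪ F) + (S' \ S).card := by
    rw [← h2]
    exact r_union_le hM _ _ (by rw [h2]; exact hF.union_sub hS')
  have h4 : (S' \ S).card = S'.card - S.card := card_sdiff_of_subset h
  have h5 : S.card ≤ S'.card := card_le_card h
  have h6 := RRank_le_card hM hF hS
  have h7 := RRank_add hM hF hS
  unfold RIndep
  omega

lemma not_RDep_iff {S : Finset U} (hS : InJ cls J S) : ¬ RDep r F S ↔ RIndep r F S := by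
  have := RRank_le_card hM hF hS
  unfold RDep RIndep; omega

lemma RDep.superset_rel {S S' : Finset U} (hS' : InJ cls J S') (h : S ⊆ S')
    (hd : RDep r F S) : RDep r F S' := by
  by_contra h'
  rw [not_RDep_iff hM hF hS'] at h'
  have := h'.subset_rel hM hF hS' h
  rw [← not_RDep_iff hM hF (hS'.subset h)] at this
  exact this hd

lemma RRank_submod {S T : Finset U} (hST : InJ cls J (S ∪ T)) :
    RRank r F (S ∪ T) + RRank r F (S ∩ T) ≤ RRank r F S + RRank r F T := by
  have hS : InJ cls J S := hST.subset subset_union_left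
  have hT : InJ cls J T := hST.subset subset_union_right
  have hI : InJ cls J (S ∩ T) := hS.subset inter_subset_left
  have e1 : (S ∪ F) ∪ (T ∪ F) = (S ∪ T) ∪ F := by ext u; simp [mem_union]; tauto
  have e2 : (S ∪ F) ∩ (T ∪ F) = (S ∩ T) ∪ F := by
    ext u; simp only [mem_inter, mem_union]
    constructor
    · rintro ⟨h1 | h1, h2 | h2⟩ <;> simp_all
    · rintro (⟨h1, h2⟩ | h) <;> simp_all
  have hsub := hM.submod (S ∪ F) (T ∪ F) (by rw [e1]; exact hF.union_sub hST)
  rw [e1, e2] at hsub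
  have a1 := RRank_add hM hF hST
  have a2 := RRank_add hM hF hI
  have a3 := RRank_add hM hF hS
  have a4 := RRank_add hM hF hT
  omega

lemma RRank_insert_split {S : Finset U} {v : U} (hS : InJ cls J S) (hvJ : cls v ∈ J)
    (hv : ∀ u ∈ S, cls u ≠ cls v) :
    RRank r F (insert v S) = RRank r F {v} + RRank r (insert v F) S := by
  have hvS : InJ cls J (insert v S) := hS.insert hvJ hv
  have hv1 : InJ cls J ({v} : Finset U) := hvS.subset (by simp)
  have e1 : (insert v S) ∪ F = S ∪ (insert v F) := by
    ext u; simp only [mem_union, mem_insert]; tauto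
  have e2 : ({v} : Finset U) ∪ F = insert v F := (insert_eq v F).symm
  have g1 : r F ≤ r (({v} : Finset U) ∪ F) := rF_le_union hM hF hv1
  have g2 : r (insert v F) ≤ r (S ∪ insert v F) := by
    refine hM.mono _ _ (by rw [← e1]; exact hF.union_sub hvS) subset_union_right
  have g3 := RRank_add hM hF hvS
  unfold RRank
  rw [e1, e2] at *
  omega

end RRankFacts

/-- A relative circuit. -/
def RCirc (cls : U → ι) (r : Finset U → ℕ) (J : Finset ι) (F : Finset U)
    (C : Finset U) : Prop :=
  InJ cls J C ∧ RDep r F C ∧ ∀ D ⊂ C, RIndep r F D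

section Circuits
variable (hM : IsMultimatroid cls r) (hF : Ctx cls J F)
include hM hF

lemma exists_circuit : ∀ S : Finset U, InJ cls J S → RDep r F S →
    ∃ C, C ⊆ S ∧ RCirc cls r J F C := by
  intro S
  induction S using Finset.strongInductionOn with
  | _ S ih =>
    intro hS hd
    by_cases h : ∀ D ⊂ S, RIndep r F D
    · exact ⟨S, Subset.rfl, hS, hd, h⟩
    · push_neg at h
      obtain ⟨D, hDS, hD⟩ := h
      have hDd : RDep r F D := by
        have := not_RDep_iff hM hF (hS.subset hDS.subset)
        tauto
      obtain ⟨C, hCD, hC⟩ := ih D hDS (hS.subset hDS.subset) hDd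
      exact ⟨C, hCD.trans hDS.subset, hC⟩

lemma RCirc.nonempty {C : Finset U} (hC : RCirc cls r J F C) : C.Nonempty := by
  rcases C.eq_empty_or_nonempty with rfl | h
  · exfalso
    have := hC.2.1
    unfold RDep at this
    rw [RRank_empty hM hF] at this
    simp at this
  · exact h

lemma RCirc.rrank_eq {C : Finset U} (hC : RCirc cls r J F C) :
    RRank r F C + 1 = C.card := by
  obtain ⟨x, hx⟩ := RCirc.nonempty hM hF hC
  have h1 : RIndep r F (C.erase x) := hC.2.2 _ (Finset.erase_ssubset hx)
  have h2 : RRank r F (C.erase x) ≤ RRank r F C := RRank_mono hM hF hC.1 (erase_subset _ _)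
  have h3 := hC.2.1
  have h4 : (C.erase x).card = C.card - 1 := card_erase_of_mem hx
  have h5 : 1 ≤ C.card := card_pos.mpr ⟨x, hx⟩
  unfold RDep at h3; unfold RIndep at h1
  omega

lemma circuit_mem_of_subset {X C : Finset U} {u : U} (hX : InJ cls J X)
    (hXu : RIndep r F (X.erase u)) (hC : RCirc cls r J F C) (hCX : C ⊆ X) : u ∈ C := by
  by_contra hu
  have hsub : C ⊆ X.erase u := fun x hx => mem_erase.mpr ⟨fun h => hu (h ▸ hx), hCX hx⟩
  have : RIndep r F C := hXu.subset_rel hM hF (hX.subset (erase_subset _ _)) hsub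
  have := (not_RDep_iff hM hF hC.1).mpr this
  exact this hC.2.1

lemma circuit_unique {X C₁ C₂ : Finset U} {u : U} (hX : InJ cls J X) (hu : u ∈ X)
    (hXu : RIndep r F (X.erase u)) (hC₁ : RCirc cls r J F C₁) (h1X : C₁ ⊆ X)
    (hC₂ : RCirc cls r J F C₂) (h2X : C₂ ⊆ X) : C₁ = C₂ := by
  by_contra hne
  have hu1 : u ∈ C₁ := circuit_mem_of_subset hM hF hX hXu hC₁ h1X
  have hu2 : u ∈ C₂ := circuit_mem_of_subset hM hF hX hXu hC₂ h2X
  -- C₁ ∩ C₂ is a proper subset of C₁ or of C₂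
  have hproper : C₁ ∩ C₂ ⊂ C₁ ∨ C₁ ∩ C₂ ⊂ C₂ := by
    by_cases h : C₁ ⊆ C₂
    · right
      rw [inter_eq_left.mpr h]
      exact Finset.ssubset_iff_subset_ne.mpr ⟨h, hne⟩
    · left
      exact Finset.ssubset_iff_subset_ne.mpr ⟨inter_subset_left,
        fun heq => h (by rw [← heq]; exact inter_subset_right)⟩
  have hIindep : RIndep r F (C₁ ∩ C₂) := by
    rcases hproper with h | h
    · exact hC₁.2.2 _ h
    · exact hC₂.2.2 _ h
  have hUX : C₁ ∪ C₂ ⊆ X := union_subset h1X h2X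
  have hUinJ : InJ cls J (C₁ ∪ C₂) := hX.subset hUX
  have hsubmod := RRank_submod hM hF (S := C₁) (T := C₂) hUinJ
  have hr1 := RCirc.rrank_eq hM hF hC₁
  have hr2 := RCirc.rrank_eq hM hF hC₂
  have hUer : (C₁ ∪ C₂).erase u ⊆ X.erase u := erase_subset_erase _ hUX
  have hUerI : RIndep r F ((C₁ ∪ C₂).erase u) :=
    hXu.subset_rel hM hF (hX.subset (erase_subset _ _)) hUer
  have hUgeq : RRank r F ((C₁ ∪ C₂).erase u) ≤ RRank r F (C₁ ∪ C₂) :=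
    RRank_mono hM hF hUinJ (erase_subset _ _)
  have hcard : (C₁ ∪ C₂).card + (C₁ ∩ C₂).card = C₁.card + C₂.card :=
    card_union_add_card_inter _ _
  have hcarde : ((C₁ ∪ C₂).erase u).card = (C₁ ∪ C₂).card - 1 :=
    card_erase_of_mem (mem_union_left _ hu1)
  have h1le : 1 ≤ (C₁ ∪ C₂).card := card_pos.mpr ⟨u, mem_union_left _ hu1⟩
  unfold RIndep at hIindep hUerI
  omega

end Circuits

lemma subtrans_singleton {cls : U → ι} {a : U} : Subtransversal cls ({a} : Finset U) := by
  intro x hx y hy _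
  simp only [coe_singleton, Set.mem_singleton_iff] at hx hy
  rw [hx, hy]

lemma mem_skewClass {cls : U → ι} {u : U} {i : ι} : u ∈ skewClass cls i ↔ cls u = i := by
  simp [skewClass]

/-- The fundamental circuit inside `X` (relative to `F`). -/
noncomputable def fundC (cls : U → ι) (r : Finset U → ℕ) (J : Finset ι) (F X : Finset U) :
    Finset U :=
  if h : ∃ C, C ⊆ X ∧ RCirc cls r J F C then h.choose else ∅

/-- `RActive` mirrors `Active` in the relative setting. -/
def RActive [LinearOrder ι] (cls : U → ι) (r : Finset U → ℕ) (J : Finset ι) (F B : Finset U)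
    (i : ι) : Prop :=
  ∃ C, RCirc cls r J F C ∧ C \ skewClass cls i ⊆ B ∧ ∃ m ∈ C, cls m = i ∧ ∀ x ∈ C, i ≤ cls x

/-- The relative version of `underElt`. -/
noncomputable def RUnder (cls : U → ι) (r : Finset U → ℕ) (F B : Finset U) (i : ι) (d : U) : U :=
  if h : ∃ u, cls u = i ∧ RDep r F (insert u (B \ skewClass cls i)) then h.choose else d

section Fund
variable (hM : IsMultimatroid cls r) (hF : Ctx cls J F)
include hM hF

lemma fundC_spec {X : Finset U} {u : U} (hX : InJ cls J X) (hu : u ∈ X)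
    (hXu : RIndep r F (X.erase u)) (hd : RDep r F X) :
    fundC cls r J F X ⊆ X ∧ RCirc cls r J F (fundC cls r J F X) ∧ u ∈ fundC cls r J F X ∧
      (∀ C, RCirc cls r J F C → C ⊆ X → C = fundC cls r J F X) ∧
      (∀ x ∈ X, (x ∈ fundC cls r J F X ↔ RIndep r F (X.erase x))) := by
  have hex : ∃ C, C ⊆ X ∧ RCirc cls r J F C := exists_circuit hM hF X hX hd
  have hfc : fundC cls r J F X = hex.choose := by unfold fundC; rw [dif_pos hex]
  obtain ⟨hCX, hC⟩ := hex.choose_spec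
  rw [hfc]
  have huniq : ∀ C', RCirc cls r J F C' → C' ⊆ X → C' = hex.choose := fun C' hC' hC'X =>
    circuit_unique hM hF hX hu hXu hC' hC'X hC hCX
  refine ⟨hCX, hC, ?_, huniq, ?_⟩
  · exact circuit_mem_of_subset hM hF hX hXu hC hCX
  · intro x hx
    constructor
    · intro hxC
      by_contra hind
      have hdep : RDep r F (X.erase x) := by
        by_contra h
        exact hind ((not_RDep_iff hM hF (hX.subset (erase_subset x X))).mp h)
      obtain ⟨C', hC'X, hC'⟩ := exists_circuit hM hF _ (hX.subset (erase_subset _ _)) hdep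
      have := huniq C' hC' (hC'X.trans (erase_subset _ _))
      rw [this] at hC'X
      exact (mem_erase.mp (hC'X hxC)).1 rfl
    · intro hind
      by_contra hxC
      have hsub : hex.choose ⊆ X.erase x := fun y hy =>
        mem_erase.mpr ⟨fun h => hxC (h ▸ hy), hCX hy⟩
      have : RIndep r F hex.choose :=
        hind.subset_rel hM hF (hX.subset (erase_subset _ _)) hsub
      have := (not_RDep_iff hM hF hC.1).mpr this
      exact this hC.2.1

lemma attach_unique {Y : Finset U} {i : ι} (hi : i ∈ J) (hY : InJ cls J Y)
    (hYind : RIndep r F Y) (hYi : ∀ u ∈ Y, cls u ≠ i) {u₁ u₂ : U}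
    (h1 : cls u₁ = i) (h2 : cls u₂ = i) (hd1 : RDep r F (insert u₁ Y))
    (hd2 : RDep r F (insert u₂ Y)) : u₁ = u₂ := by
  by_contra hne
  have key : ∀ u, cls u = i → RDep r F (insert u Y) → r (insert u (Y ∪ F)) = r (Y ∪ F) := by
    intro u hu hdu
    have hnotY : u ∉ Y := fun h => hYi u h hu
    have hinJ : InJ cls J (insert u Y) :=
      hY.insert (hu ▸ hi) (fun w hw => by rw [hu]; exact hYi w hw)
    have hcard : (insert u Y).card = Y.card + 1 := card_insert_of_notMem hnotY
    have hle : RRank r F (insert u Y) ≤ Y.card := by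
      have := hdu; unfold RDep at this; omega
    have hge : Y.card ≤ RRank r F (insert u Y) := by
      have hmono := RRank_mono hM hF hinJ (subset_insert u Y)
      have : RRank r F Y = Y.card := hYind
      omega
    have ha1 := RRank_add hM hF hinJ
    have ha2 := RRank_add hM hF hY
    have he : insert u Y ∪ F = insert u (Y ∪ F) := insert_union u Y F
    rw [he] at ha1
    have hceq : RRank r F Y = Y.card := hYind
    omega
  have hR2 := hM.axiomR2 (Y ∪ F) u₁ u₂ (hF.union_sub hY) (h1.trans h2.symm) hne
    (by
      intro w hw
      rw [h1]
      rcases mem_union.mp hw with h | h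
      · exact hYi w h
      · intro hcl; exact hF.notin w h (hcl ▸ hi))
  rw [key u₁ h1 hd1, key u₂ h2 hd2] at hR2
  omega

variable [LinearOrder ι]

lemma ractive_iff {B : Finset U} {i : ι} (hi : i ∈ J) (hB : InJ cls J B)
    (hBind : RIndep r F B) :
    RActive cls r J F B i ↔ ∃ u, cls u = i ∧ RDep r F (insert u (B \ skewClass cls i)) ∧
      ∀ y ∈ fundC cls r J F (insert u (B \ skewClass cls i)), i ≤ cls y := by
  set Y := B \ skewClass cls i with hYdef
  have hYB : Y ⊆ B := sdiff_subset
  have hYInJ : InJ cls J Y := hB.subset hYB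
  have hYind : RIndep r F Y := hBind.subset_rel hM hF hB hYB
  have hYi : ∀ u ∈ Y, cls u ≠ i := by
    intro u hu
    have := (mem_sdiff.mp hu).2
    rwa [mem_skewClass] at this
  constructor
  · rintro ⟨C, hC, hCB, m, hmC, hmi, hmin⟩
    have hmY : m ∉ Y := fun h => hYi m h hmi
    have hCX : C ⊆ insert m Y := by
      intro y hy
      by_cases hcy : cls y = i
      · have : y = m := hC.1.1 (by exact_mod_cast hy) (by exact_mod_cast hmC) (hcy.trans hmi.symm)
        rw [this]; exact mem_insert_self _ _
      · have hyB : y ∈ B := hCB (mem_sdiff.mpr ⟨hy, fun h => hcy (mem_skewClass.mp h)⟩)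
        exact mem_insert_of_mem (mem_sdiff.mpr ⟨hyB, fun h => hcy (mem_skewClass.mp h)⟩)
    have hXInJ : InJ cls J (insert m Y) :=
      hYInJ.insert (hmi ▸ hi) (fun w hw => by rw [hmi]; exact hYi w hw)
    have hXd : RDep r F (insert m Y) := hC.2.1.superset_rel hM hF hXInJ hCX
    have herase : (insert m Y).erase m = Y := erase_insert hmY
    have hspec := fundC_spec hM hF hXInJ (mem_insert_self m Y) (by rw [herase]; exact hYind) hXd
    refine ⟨m, hmi, hXd, ?_⟩
    have := hspec.2.2.2.1 C hC hCX
    rw [← this]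
    exact hmin
  · rintro ⟨u, hui, hd, hmin⟩
    have huY : u ∉ Y := fun h => hYi u h hui
    have hXInJ : InJ cls J (insert u Y) :=
      hYInJ.insert (hui ▸ hi) (fun w hw => by rw [hui]; exact hYi w hw)
    have herase : (insert u Y).erase u = Y := erase_insert huY
    have hspec := fundC_spec hM hF hXInJ (mem_insert_self u Y) (by rw [herase]; exact hYind) hd
    refine ⟨fundC cls r J F (insert u Y), hspec.2.1, ?_, u, hspec.2.2.1, hui, hmin⟩
    intro y hy
    have hyC := mem_sdiff.mp hy
    have hyX := hspec.1 hyC.1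
    rcases mem_insert.mp hyX with rfl | hyY
    · exact absurd (mem_skewClass.mpr hui) hyC.2
    · exact hYB hyY

lemma runder_eq {B : Finset U} {i : ι} {u d : U} (hi : i ∈ J) (hB : InJ cls J B)
    (hBind : RIndep r F B) (hui : cls u = i)
    (hd : RDep r F (insert u (B \ skewClass cls i))) :
    RUnder cls r F B i d = u := by
  set Y := B \ skewClass cls i with hYdef
  have hYB : Y ⊆ B := sdiff_subset
  have hYInJ : InJ cls J Y := hB.subset hYB
  have hYind : RIndep r F Y := hBind.subset_rel hM hF hB hYB
  have hYi : ∀ w ∈ Y, cls w ≠ i := by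
    intro w hw
    have := (mem_sdiff.mp hw).2
    rwa [mem_skewClass] at this
  have hex : ∃ u', cls u' = i ∧ RDep r F (insert u' (B \ skewClass cls i)) := ⟨u, hui, hd⟩
  unfold RUnder
  rw [dif_pos hex]
  obtain ⟨h1, h2⟩ := hex.choose_spec
  exact attach_unique hM hF hi hYInJ hYind hYi h1 hui h2 hd

end Fund

section Shift
variable (hM : IsMultimatroid cls r) (hF : Ctx cls J F)
variable {i₀ : ι} {v : U}

lemma InJ.widen {S : Finset U} {J' : Finset ι} (hS : InJ cls J' S) (h : J' ⊆ J) :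
    InJ cls J S := ⟨hS.1, fun u hu => h (hS.2 u hu)⟩

lemma ctx_shift (hF : Ctx cls J F) (hv : cls v = i₀) (hi₀ : i₀ ∈ J) :
    Ctx cls (J.erase i₀) (insert v F) := by
  refine ⟨?_, ?_, ?_⟩
  · exact subtrans_insert hF.sub (fun u hu hc => hF.notin u hu (by rw [hc, hv]; exact hi₀))
  · intro u hu
    rcases mem_insert.mp hu with rfl | hu
    · rw [hv]; exact notMem_erase _ _
    · exact fun h => hF.notin u hu (mem_of_mem_erase h)
  · intro i hi
    by_cases h : i = i₀
    · exact ⟨v, mem_insert_self _ _, h ▸ hv⟩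
    · have : i ∉ J := fun hJ => hi (mem_erase.mpr ⟨h, hJ⟩)
      obtain ⟨u, hu, hcu⟩ := hF.covers i this
      exact ⟨u, mem_insert_of_mem hu, hcu⟩

include hM hF

lemma rrank_shift {S : Finset U} (hv : cls v = i₀) (hi₀ : i₀ ∈ J)
    (hv1 : RRank r F {v} = 1) (hS : InJ cls (J.erase i₀) S) :
    RRank r F (insert v S) = 1 + RRank r (insert v F) S := by
  have hSJ : InJ cls J S := hS.widen (erase_subset _ _)
  have h := RRank_insert_split hM hF hSJ (hv ▸ hi₀)
    (fun u hu hc => (mem_erase.mp (hS.2 u hu)).1 (by rw [hc, hv]))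
  rw [h, hv1]

lemma rdep_shift {S : Finset U} (hv : cls v = i₀) (hi₀ : i₀ ∈ J)
    (hv1 : RRank r F {v} = 1) (hS : InJ cls (J.erase i₀) S) :
    RDep r F (insert v S) ↔ RDep r (insert v F) S := by
  have hvS : v ∉ S := fun h => (mem_erase.mp (hS.2 v h)).1 hv
  have hcard : (insert v S).card = S.card + 1 := card_insert_of_notMem hvS
  have h := rrank_shift hM hF hv hi₀ hv1 hS
  unfold RDep
  omega

lemma rindep_shift {S : Finset U} (hv : cls v = i₀) (hi₀ : i₀ ∈ J)
    (hv1 : RRank r F {v} = 1) (hS : InJ cls (J.erase i₀) S) :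
    RIndep r F (insert v S) ↔ RIndep r (insert v F) S := by
  have hvS : v ∉ S := fun h => (mem_erase.mp (hS.2 v h)).1 hv
  have hcard : (insert v S).card = S.card + 1 := card_insert_of_notMem hvS
  have h := rrank_shift hM hF hv hi₀ hv1 hS
  unfold RIndep
  omega

lemma fundC_shift {X : Finset U} {u : U} (hv : cls v = i₀) (hi₀ : i₀ ∈ J)
    (hv1 : RRank r F {v} = 1) (hvX : v ∉ X) (hX : InJ cls (J.erase i₀) X) (hu : u ∈ X)
    (hXu : RIndep r (insert v F) (X.erase u)) (hd : RDep r (insert v F) X) :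
    fundC cls r (J.erase i₀) (insert v F) X = (fundC cls r J F (insert v X)).erase v := by
  have hctx' : Ctx cls (J.erase i₀) (insert v F) := ctx_shift hF hv hi₀
  have hXJ : InJ cls J X := hX.widen (erase_subset _ _)
  have hvXInJ : InJ cls J (insert v X) :=
    hXJ.insert (hv ▸ hi₀) (fun w hw hc => (mem_erase.mp (hX.2 w hw)).1 (by rw [hc, hv]))
  have huv : u ≠ v := fun h => hvX (h ▸ hu)
  have herase : (insert v X).erase u = insert v (X.erase u) := by
    rw [erase_insert_of_ne huv.symm]
  have hXuJ : InJ cls (J.erase i₀) (X.erase u) := hX.subset (erase_subset _ _)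
  have hbig_ind : RIndep r F ((insert v X).erase u) := by
    rw [herase]
    exact (rindep_shift hM hF hv hi₀ hv1 hXuJ).mpr hXu
  have hbig_dep : RDep r F (insert v X) := (rdep_shift hM hF hv hi₀ hv1 hX).mpr hd
  have hspec_big := fundC_spec hM hF hvXInJ (mem_insert_of_mem hu) hbig_ind hbig_dep
  have hspec_small := fundC_spec hM hctx' hX hu hXu hd
  ext x
  by_cases hxv : x = v
  · subst hxv
    simp only [mem_erase, ne_eq, not_true_eq_false, false_and, iff_false]
    exact fun h => hvX (hspec_small.1 h)
  · by_cases hxX : x ∈ X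
    · have h1 : x ∈ fundC cls r (J.erase i₀) (insert v F) X ↔
          RIndep r (insert v F) (X.erase x) := hspec_small.2.2.2.2 x hxX
      have h2 : x ∈ fundC cls r J F (insert v X) ↔
          RIndep r F ((insert v X).erase x) :=
        hspec_big.2.2.2.2 x (mem_insert_of_mem hxX)
      have he : (insert v X).erase x = insert v (X.erase x) :=
        erase_insert_of_ne (fun h => hxv h.symm)
      rw [h1, mem_erase]
      rw [h2, he, rindep_shift hM hF hv hi₀ hv1 (hX.subset (erase_subset _ _))]
      simp [hxv]
    · constructor
      · intro h; exact absurd (hspec_small.1 h) hxX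
      · intro h
        have := hspec_big.1 (mem_erase.mp h).2
        rcases mem_insert.mp this with rfl | h'
        · exact absurd rfl hxv
        · exact absurd h' hxX

lemma ractive_top {B : Finset U} [LinearOrder ι] (hi₀ : i₀ ∈ J) (hmax : ∀ i ∈ J, i ≤ i₀)
    (hB : InJ cls J B) :
    RActive cls r J F B i₀ ↔ ∃ m, cls m = i₀ ∧ RRank r F {m} = 0 := by
  constructor
  · rintro ⟨C, hC, hCB, m, hmC, hmi, hmin⟩
    have hCm : C = {m} := by
      ext y
      simp only [mem_singleton]
      constructor
      · intro hy
        have h1 : i₀ ≤ cls y := hmin y hy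
        have h2 : cls y ≤ i₀ := hmax _ (hC.1.2 y hy)
        exact hC.1.1 (by exact_mod_cast hy) (by exact_mod_cast hmC)
          ((le_antisymm h2 h1).trans hmi.symm)
      · rintro rfl; exact hmC
    refine ⟨m, hmi, ?_⟩
    have := hC.2.1
    rw [hCm] at this
    unfold RDep at this
    simp only [card_singleton] at this
    omega
  · rintro ⟨m, hmi, hm0⟩
    refine ⟨{m}, ⟨⟨subtrans_singleton, ?_⟩, ?_, ?_⟩, ?_, m, mem_singleton_self m, hmi, ?_⟩
    · intro u hu; rw [mem_singleton.mp hu, hmi]; exact hi₀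
    · unfold RDep; rw [hm0]; simp
    · intro D hD
      rw [Finset.ssubset_singleton_iff.mp hD]
      exact RRank_empty hM hF
    · intro y hy
      rw [mem_sdiff] at hy
      exact absurd (mem_skewClass.mpr (by rw [mem_singleton.mp hy.1, hmi])) hy.2
    · intro y hy
      rw [mem_singleton.mp hy, hmi]

lemma singular_unique {m₁ m₂ : U} (hi₀ : i₀ ∈ J) (h1 : cls m₁ = i₀) (h2 : cls m₂ = i₀)
    (hm1 : RRank r F {m₁} = 0) (hm2 : RRank r F {m₂} = 0) : m₁ = m₂ := by
  have hempty : InJ cls J (∅ : Finset U) := ⟨by intro a ha; simp at ha, by simp⟩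
  have hsing : ∀ w : U, RRank r F {w} = 0 → RDep r F (insert w (∅ : Finset U)) := by
    intro w hw
    have he : insert w (∅ : Finset U) = {w} := by simp
    rw [he]
    unfold RDep
    rw [hw]
    simp
  exact attach_unique hM hF hi₀ hempty
    (by unfold RIndep; rw [RRank_empty hM hF]; simp) (by simp) h1 h2
    (hsing _ hm1) (hsing _ hm2)

lemma rrank_singleton_le {w : U} (hw : cls w ∈ J) : RRank r F {w} ≤ 1 := by
  have : InJ cls J {w} := ⟨subtrans_singleton, by simpa using hw⟩
  have := RRank_le_card hM hF this
  simpa using this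

lemma nonsingular_rrank_one {m w : U} (hi₀ : i₀ ∈ J) (hm : cls m = i₀) (hw : cls w = i₀)
    (hm0 : RRank r F {m} = 0) (hne : w ≠ m) : RRank r F {w} = 1 := by
  have hR2 := hM.axiomR2 F w m hF.sub (by rw [hw, hm]) hne
    (fun u hu hc => hF.notin u hu (by rw [hc, hw]; exact hi₀))
  have hsm : InJ cls J {m} := ⟨subtrans_singleton, by simpa [hm] using hi₀⟩
  have hsw : InJ cls J {w} := ⟨subtrans_singleton, by simpa [hw] using hi₀⟩
  have e1 : ({m} : Finset U) ∪ F = insert m F := (insert_eq m F).symm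
  have e2 : ({w} : Finset U) ∪ F = insert w F := (insert_eq w F).symm
  have a1 := RRank_add hM hF hsm
  have a2 := RRank_add hM hF hsw
  rw [e1] at a1; rw [e2] at a2
  have hle := rrank_singleton_le hM hF (hw ▸ hi₀)
  omega

lemma caseB_insert_m {m : U} {S : Finset U} (hi₀ : i₀ ∈ J) (hm : cls m = i₀)
    (hm0 : RRank r F {m} = 0) (hS : InJ cls (J.erase i₀) S) :
    r (insert m (S ∪ F)) = r (S ∪ F) := by
  have hSJ : InJ cls J S := hS.widen (erase_subset _ _)
  have hcl : ∀ w ∈ S ∪ F, cls w ≠ i₀ := by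
    intro w hw
    rcases mem_union.mp hw with h | h
    · exact (mem_erase.mp (hS.2 w h)).1
    · exact fun hc => hF.notin w h (hc ▸ hi₀)
  have hsub : Subtransversal cls (S ∪ F) := hF.union_sub hSJ
  have hsm : InJ cls J {m} := ⟨subtrans_singleton, by simpa [hm] using hi₀⟩
  have e1 : ({m} : Finset U) ∪ F = insert m F := (insert_eq m F).symm
  have a1 := RRank_add hM hF hsm
  rw [e1] at a1
  have hsub' : Subtransversal cls (insert m (S ∪ F)) :=
    subtrans_insert hsub (fun w hw => by rw [hm]; exact hcl w hw)
  have eu : (S ∪ F) ∪ insert m F = insert m (S ∪ F) := by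
    ext y; simp only [mem_union, mem_insert]; tauto
  have ei : (S ∪ F) ∩ insert m F = F := by
    ext y
    simp only [mem_inter, mem_union, mem_insert]
    constructor
    · rintro ⟨h1 | h1, rfl | h2⟩
      · exact absurd hm (hcl y (mem_union_left _ h1))
      · exact h2
      · exact absurd hm (hcl y (mem_union_right _ h1))
      · exact h2
    · intro h; exact ⟨Or.inr h, Or.inr h⟩
  have hsubmod := hM.submod (S ∪ F) (insert m F) (by rw [eu]; exact hsub')
  rw [eu, ei] at hsubmod
  have hmono : r (S ∪ F) ≤ r (insert m (S ∪ F)) :=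
    hM.mono _ _ hsub' (subset_insert _ _)
  omega

lemma caseB_insert_v {m w : U} {S : Finset U} (hi₀ : i₀ ∈ J) (hm : cls m = i₀)
    (hw : cls w = i₀) (hm0 : RRank r F {m} = 0) (hne : w ≠ m) (hS : InJ cls (J.erase i₀) S) :
    r (insert w (S ∪ F)) = r (S ∪ F) + 1 := by
  have hSJ : InJ cls J S := hS.widen (erase_subset _ _)
  have hcl : ∀ u ∈ S ∪ F, cls u ≠ i₀ := by
    intro u hu
    rcases mem_union.mp hu with h | h
    · exact (mem_erase.mp (hS.2 u h)).1
    · exact fun hc => hF.notin u h (hc ▸ hi₀)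
  have hsub : Subtransversal cls (S ∪ F) := hF.union_sub hSJ
  have hsub' : Subtransversal cls (insert w (S ∪ F)) :=
    subtrans_insert hsub (fun u hu => by rw [hw]; exact hcl u hu)
  have hR2 := hM.axiomR2 (S ∪ F) w m hsub (by rw [hw, hm]) hne
    (fun u hu hc => hcl u hu (by rw [hc, hw]))
  rw [caseB_insert_m hM hF hi₀ hm hm0 hS] at hR2
  have hle := r_insert_le hM (S ∪ F) w hsub'
  omega

lemma caseB_rank_shift {m u : U} {S : Finset U} (hi₀ : i₀ ∈ J) (hm : cls m = i₀)
    (hm0 : RRank r F {m} = 0) (hu : cls u = i₀) (hS : InJ cls (J.erase i₀) S) :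
    RRank r (insert u F) S = RRank r F S := by
  have hSJ : InJ cls J S := hS.widen (erase_subset _ _)
  have hempty : InJ cls (J.erase i₀) (∅ : Finset U) := ⟨by intro a ha; simp at ha, by simp⟩
  have e1 : S ∪ insert u F = insert u (S ∪ F) := by
    ext y; simp only [mem_union, mem_insert]; tauto
  have e2 : (∅ : Finset U) ∪ F = F := empty_union F
  have e3 : insert u (∅ ∪ F) = insert u F := by rw [e2]
  have a0 := RRank_add hM hF hSJ
  by_cases hum : u = m
  · subst hum
    have k1 : r (insert u (S ∪ F)) = r (S ∪ F) := caseB_insert_m hM hF hi₀ hm hm0 hS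
    have k2 : r (insert u F) = r F := by
      have := caseB_insert_m hM hF hi₀ hm hm0 hempty
      rwa [e2] at this
    unfold RRank
    rw [e1, k1, k2]
  · have k1 : r (insert u (S ∪ F)) = r (S ∪ F) + 1 :=
      caseB_insert_v hM hF hi₀ hm hu hm0 hum hS
    have k2 : r (insert u F) = r F + 1 := by
      have := caseB_insert_v hM hF hi₀ hm hu hm0 hum hempty
      rwa [e2] at this
    unfold RRank
    rw [e1, k1, k2]
    unfold RRank at a0
    omega


end Shift

section Shift2
variable (hM : IsMultimatroid cls r) (hF : Ctx cls J F)
variable {i₀ : ι} {v : U} [LinearOrder ι]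
include hM hF

lemma sdiff_skew_insert {B' : Finset U} {i : ι} (hv : cls v = i₀) (hne : i ≠ i₀) :
    (insert v B') \ skewClass cls i = insert v (B' \ skewClass cls i) := by
  ext y
  simp only [mem_sdiff, mem_insert, mem_skewClass]
  constructor
  · rintro ⟨rfl | hy, hcy⟩
    · exact Or.inl rfl
    · exact Or.inr ⟨hy, hcy⟩
  · rintro (rfl | ⟨hy, hcy⟩)
    · exact ⟨Or.inl rfl, fun h => hne (by rw [← h, hv])⟩
    · exact ⟨Or.inr hy, hcy⟩

lemma ractive_shift {B' : Finset U} {i : ι} (hi₀ : i₀ ∈ J) (hmax : ∀ j ∈ J, j ≤ i₀)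
    (hv : cls v = i₀) (hv1 : RRank r F {v} = 1) (hB' : InJ cls (J.erase i₀) B')
    (hB'ind : RIndep r (insert v F) B') (hi : i ∈ J.erase i₀) :
    RActive cls r J F (insert v B') i ↔ RActive cls r (J.erase i₀) (insert v F) B' i := by
  have hctx' : Ctx cls (J.erase i₀) (insert v F) := ctx_shift hF hv hi₀
  have hiJ : i ∈ J := mem_of_mem_erase hi
  have hii₀ : i ≠ i₀ := (mem_erase.mp hi).1
  have hvB' : v ∉ B' := fun h => (mem_erase.mp (hB'.2 v h)).1 hv
  have hBInJ : InJ cls J (insert v B') :=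
    (hB'.widen (erase_subset _ _)).insert (hv ▸ hi₀)
      (fun w hw hc => (mem_erase.mp (hB'.2 w hw)).1 (by rw [hc, hv]))
  have hBind : RIndep r F (insert v B') := (rindep_shift hM hF hv hi₀ hv1 hB').mpr hB'ind
  set Y' := B' \ skewClass cls i with hY'def
  have hY'B' : Y' ⊆ B' := sdiff_subset
  have hY'InJ : InJ cls (J.erase i₀) Y' := hB'.subset hY'B'
  have hY'i : ∀ w ∈ Y', cls w ≠ i := fun w hw => by
    have := (mem_sdiff.mp hw).2; rwa [mem_skewClass] at this
  have hsd : (insert v B') \ skewClass cls i = insert v Y' :=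
    sdiff_skew_insert hM hF hv hii₀
  have hbig := ractive_iff hM hF hiJ hBInJ hBind
  have hsmall := ractive_iff hM hctx' hi hB' hB'ind
  rw [hbig, hsmall]
  have key : ∀ u, cls u = i →
      (RDep r F (insert u ((insert v B') \ skewClass cls i)) ↔
        RDep r (insert v F) (insert u Y')) := by
    intro u hui
    rw [hsd, Finset.insert_comm]
    have hXInJ : InJ cls (J.erase i₀) (insert u Y') :=
      hY'InJ.insert (hui ▸ hi) (fun w hw hc => hY'i w hw (by rw [hc, hui]))
    exact rdep_shift hM hF hv hi₀ hv1 hXInJ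
  constructor
  · rintro ⟨u, hui, hdep, hmin⟩
    refine ⟨u, hui, (key u hui).mp hdep, ?_⟩
    have hXInJ : InJ cls (J.erase i₀) (insert u Y') :=
      hY'InJ.insert (hui ▸ hi) (fun w hw hc => hY'i w hw (by rw [hc, hui]))
    have huY' : u ∉ Y' := fun h => hY'i u h hui
    have hvX : v ∉ insert u Y' := by
      intro h
      rcases mem_insert.mp h with rfl | h'
      · exact hii₀ (by rw [← hui, hv])
      · exact hvB' (hY'B' h')
    have hfc := fundC_shift hM hF hv hi₀ hv1 hvX hXInJ (mem_insert_self u Y')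
      (by rw [erase_insert huY']; exact hB'ind.subset_rel hM hctx' hB' hY'B')
      ((key u hui).mp hdep)
    rw [hfc]
    intro y hy
    have : y ∈ fundC cls r J F (insert v (insert u Y')) := (mem_erase.mp hy).2
    rw [← Finset.insert_comm, ← hsd] at this
    exact hmin y this
  · rintro ⟨u, hui, hdep, hmin⟩
    refine ⟨u, hui, (key u hui).mpr hdep, ?_⟩
    have hXInJ : InJ cls (J.erase i₀) (insert u Y') :=
      hY'InJ.insert (hui ▸ hi) (fun w hw hc => hY'i w hw (by rw [hc, hui]))
    have huY' : u ∉ Y' := fun h => hY'i u h hui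
    have hvX : v ∉ insert u Y' := by
      intro h
      rcases mem_insert.mp h with rfl | h'
      · exact hii₀ (by rw [← hui, hv])
      · exact hvB' (hY'B' h')
    have hfc := fundC_shift hM hF hv hi₀ hv1 hvX hXInJ (mem_insert_self u Y')
      (by rw [erase_insert huY']; exact hB'ind.subset_rel hM hctx' hB' hY'B')
      hdep
    intro y hy
    rw [hsd, Finset.insert_comm] at hy
    by_cases hyv : y = v
    · rw [hyv, hv]; exact hmax i hiJ
    · have : y ∈ fundC cls r (J.erase i₀) (insert v F) (insert u Y') := by
        rw [hfc]; exact mem_erase.mpr ⟨hyv, hy⟩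
      exact hmin y this

lemma runder_shift {B' : Finset U} {i : ι} {d : U} (hi₀ : i₀ ∈ J) (hmax : ∀ j ∈ J, j ≤ i₀)
    (hv : cls v = i₀) (hv1 : RRank r F {v} = 1) (hB' : InJ cls (J.erase i₀) B')
    (hB'ind : RIndep r (insert v F) B') (hi : i ∈ J.erase i₀)
    (hact : RActive cls r (J.erase i₀) (insert v F) B' i) :
    RUnder cls r F (insert v B') i d = RUnder cls r (insert v F) B' i d := by
  have hctx' : Ctx cls (J.erase i₀) (insert v F) := ctx_shift hF hv hi₀
  have hiJ : i ∈ J := mem_of_mem_erase hi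
  have hii₀ : i ≠ i₀ := (mem_erase.mp hi).1
  have hBInJ : InJ cls J (insert v B') :=
    (hB'.widen (erase_subset _ _)).insert (hv ▸ hi₀)
      (fun w hw hc => (mem_erase.mp (hB'.2 w hw)).1 (by rw [hc, hv]))
  have hBind : RIndep r F (insert v B') := (rindep_shift hM hF hv hi₀ hv1 hB').mpr hB'ind
  obtain ⟨u, hui, hdep, -⟩ := (ractive_iff hM hctx' hi hB' hB'ind).mp hact
  have hsmall : RUnder cls r (insert v F) B' i d = u :=
    runder_eq hM hctx' hi hB' hB'ind hui hdep
  have hY'InJ : InJ cls (J.erase i₀) (B' \ skewClass cls i) := hB'.subset sdiff_subset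
  have hY'i : ∀ w ∈ B' \ skewClass cls i, cls w ≠ i := fun w hw => by
    have := (mem_sdiff.mp hw).2; rwa [mem_skewClass] at this
  have hXInJ : InJ cls (J.erase i₀) (insert u (B' \ skewClass cls i)) :=
    hY'InJ.insert (hui ▸ hi) (fun w hw hc => hY'i w hw (by rw [hc, hui]))
  have hdep_big : RDep r F (insert u ((insert v B') \ skewClass cls i)) := by
    rw [sdiff_skew_insert hM hF hv hii₀, Finset.insert_comm]
    exact (rdep_shift hM hF hv hi₀ hv1 hXInJ).mpr hdep
  have hbig : RUnder cls r F (insert v B') i d = u :=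
    runder_eq hM hF hiJ hBInJ hBind hui hdep_big
  rw [hbig, hsmall]

end Shift2

section Invar
variable {J' : Finset ι} {F₁ F₂ : Finset U}

lemma rcirc_invar (hrank : ∀ S, InJ cls J' S → RRank r F₁ S = RRank r F₂ S) {C : Finset U} :
    RCirc cls r J' F₁ C ↔ RCirc cls r J' F₂ C := by
  have aux : ∀ {G₁ G₂ : Finset U},
      (∀ S, InJ cls J' S → RRank r G₁ S = RRank r G₂ S) →
      RCirc cls r J' G₁ C → RCirc cls r J' G₂ C := by
    intro G₁ G₂ hr h
    obtain ⟨hInJ, hdep, hmin⟩ := h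
    refine ⟨hInJ, ?_, ?_⟩
    · unfold RDep at hdep ⊢
      rwa [← hr C hInJ]
    · intro D hD
      have := hmin D hD
      unfold RIndep at this ⊢
      rwa [← hr D (hInJ.subset hD.subset)]
  exact ⟨aux hrank, aux (fun S hS => (hrank S hS).symm)⟩

lemma ractive_invar [LinearOrder ι] (hrank : ∀ S, InJ cls J' S → RRank r F₁ S = RRank r F₂ S)
    {B : Finset U} {i : ι} :
    RActive cls r J' F₁ B i ↔ RActive cls r J' F₂ B i := by
  unfold RActive
  constructor <;> rintro ⟨C, hC, h1, h2⟩
  · exact ⟨C, (rcirc_invar hrank).mp hC, h1, h2⟩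
  · exact ⟨C, (rcirc_invar hrank).mpr hC, h1, h2⟩

lemma runder_invar [LinearOrder ι] (hM : IsMultimatroid cls r) (hF₁ : Ctx cls J' F₁)
    (hF₂ : Ctx cls J' F₂) (hrank : ∀ S, InJ cls J' S → RRank r F₁ S = RRank r F₂ S)
    {B : Finset U} {i : ι} {d : U} (hi : i ∈ J') (hB : InJ cls J' B)
    (hB₁ : RIndep r F₁ B) (hact : RActive cls r J' F₁ B i) :
    RUnder cls r F₁ B i d = RUnder cls r F₂ B i d := by
  have hB₂ : RIndep r F₂ B := by
    unfold RIndep at hB₁ ⊢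
    rwa [← hrank B hB]
  obtain ⟨u, hui, hdep, -⟩ := (ractive_iff hM hF₁ hi hB hB₁).mp hact
  have hY : InJ cls J' (B \ skewClass cls i) := hB.subset sdiff_subset
  have hXInJ : InJ cls J' (insert u (B \ skewClass cls i)) := by
    refine hY.insert (hui ▸ hi) ?_
    intro w hw hc
    have := (mem_sdiff.mp hw).2
    rw [mem_skewClass] at this
    exact this (by rw [hc, hui])
  have hdep₂ : RDep r F₂ (insert u (B \ skewClass cls i)) := by
    unfold RDep at hdep ⊢
    rwa [← hrank _ hXInJ]
  rw [runder_eq hM hF₁ hi hB hB₁ hui hdep, runder_eq hM hF₂ hi hB hB₂ hui hdep₂]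

end Invar

section Split

lemma sum_split {M : Type} [AddCommMonoid M] (cls : U → ι) (i₀ : ι) (P : Finset U → Prop)
    (P' : U → Finset U → Prop) (f : Finset U → M)
    (h1 : ∀ T, P T ↔ ∃ v, cls v = i₀ ∧ v ∈ T ∧ P' v (T.erase v))
    (h2 : ∀ v T', cls v = i₀ → P' v T' → v ∉ T')
    (h3 : ∀ v T', cls v = i₀ → P' v T' → ∀ u ∈ T', cls u ≠ i₀) :
    ∑ T ∈ univ.filter P, f T
      = ∑ v ∈ skewClass cls i₀, ∑ T' ∈ univ.filter (fun T' => P' v T'), f (insert v T') := by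
  have hset : univ.filter P
      = (skewClass cls i₀).biUnion
          (fun v => (univ.filter (fun T' => P' v T')).image (insert v)) := by
    ext T
    simp only [mem_filter, mem_univ, true_and, mem_biUnion, mem_image, mem_skewClass]
    constructor
    · intro hP
      obtain ⟨v, hv, hvT, hP'⟩ := (h1 T).mp hP
      exact ⟨v, hv, T.erase v, hP', insert_erase hvT⟩
    · rintro ⟨v, hv, T', hP', rfl⟩
      refine (h1 _).mpr ⟨v, hv, mem_insert_self _ _, ?_⟩
      rw [erase_insert (h2 v T' hv hP')]
      exact hP'
  rw [hset, sum_biUnion ?hd]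
  case hd =>
    intro v₁ hv₁ v₂ hv₂ hne
    simp only [Set.mem_setOf_eq, mem_coe, mem_skewClass] at hv₁ hv₂
    refine disjoint_left.mpr ?_
    rintro T hT₁ hT₂
    simp only [mem_image, mem_filter, mem_univ, true_and] at hT₁ hT₂
    obtain ⟨T₁, hP₁, rfl⟩ := hT₁
    obtain ⟨T₂, hP₂, hTeq⟩ := hT₂
    have hv₂mem : v₂ ∈ insert v₁ T₁ := by rw [← hTeq]; exact mem_insert_self _ _
    rcases mem_insert.mp hv₂mem with h | h
    · exact hne h.symm
    · exact h3 v₁ T₁ hv₁ hP₁ v₂ h hv₂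
  refine sum_congr rfl (fun v hv => ?_)
  have hv' : cls v = i₀ := by
    rw [mem_skewClass] at hv
    exact hv
  rw [sum_image ?inj]
  case inj =>
    intro T₁ h₁ T₂ h₂ heq
    have e₁ := erase_insert (h2 v T₁ hv' (mem_filter.mp h₁).2)
    have e₂ := erase_insert (h2 v T₂ hv' (mem_filter.mp h₂).2)
    rw [← e₁, ← e₂, heq]

end Split

section SplitLemmas
variable {i₀ : ι}

lemma ptrans_split (hi₀ : i₀ ∈ J) {T : Finset U} :
    PTrans cls J T ↔ ∃ v, cls v = i₀ ∧ v ∈ T ∧ PTrans cls (J.erase i₀) (T.erase v) := by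
  constructor
  · rintro ⟨⟨hsub, hcls⟩, hcov⟩
    obtain ⟨v, hvT, hv⟩ := hcov i₀ hi₀
    refine ⟨v, hv, hvT, ⟨⟨subtrans_subset hsub (erase_subset _ _), ?_⟩, ?_⟩⟩
    · intro u hu
      obtain ⟨hne, huT⟩ := mem_erase.mp hu
      refine mem_erase.mpr ⟨?_, hcls u huT⟩
      intro hc
      exact hne (hsub (mem_coe.mpr huT) (mem_coe.mpr hvT) (by rw [hc, hv]))
    · intro i hi
      obtain ⟨hne, hiJ⟩ := mem_erase.mp hi
      obtain ⟨u, huT, hu⟩ := hcov i hiJ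
      refine ⟨u, mem_erase.mpr ⟨?_, huT⟩, hu⟩
      rintro rfl
      exact hne (by rw [← hu, hv])
  · rintro ⟨v, hv, hvT, ⟨⟨hsub', hcls'⟩, hcov'⟩⟩
    have hTv : insert v (T.erase v) = T := insert_erase hvT
    have hne : ∀ u ∈ T.erase v, cls u ≠ cls v := by
      intro u hu hc
      exact (mem_erase.mp (hcls' u hu)).1 (by rw [← hc] at hv; exact hv)
    refine ⟨⟨?_, ?_⟩, ?_⟩
    · rw [← hTv]
      exact subtrans_insert hsub' hne
    · intro u hu
      rw [← hTv] at hu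
      rcases mem_insert.mp hu with rfl | hu
      · rw [hv]; exact hi₀
      · exact mem_of_mem_erase (hcls' u hu)
    · intro i hi
      by_cases h : i = i₀
      · exact ⟨v, hvT, h ▸ hv⟩
      · obtain ⟨u, hu, hcu⟩ := hcov' i (mem_erase.mpr ⟨h, hi⟩)
        exact ⟨u, mem_of_mem_erase hu, hcu⟩

lemma basis_split (hM : IsMultimatroid cls r) (hF : Ctx cls J F) (hi₀ : i₀ ∈ J)
    {B : Finset U} :
    RBasis cls r J F B ↔
      ∃ v, cls v = i₀ ∧ v ∈ B ∧ RBasisV cls r (J.erase i₀) F v (B.erase v) := by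
  unfold RBasis RBasisV
  constructor
  · rintro ⟨hPT, hind⟩
    obtain ⟨v, hv, hvB, hPT'⟩ := (ptrans_split hi₀).mp hPT
    have hBInJ : InJ cls J B := hPT.1
    have hv1 : RRank r F {v} = 1 := by
      have h1 : RIndep r F {v} :=
        hind.subset_rel hM hF hBInJ (singleton_subset_iff.mpr hvB)
      unfold RIndep at h1
      simpa using h1
    refine ⟨v, hv, hvB, hv1, hPT', ?_⟩
    have hS' : InJ cls (J.erase i₀) (B.erase v) := hPT'.1
    have : RIndep r F (insert v (B.erase v)) := by
      rwa [insert_erase hvB]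
    exact (rindep_shift hM hF hv hi₀ hv1 hS').mp this
  · rintro ⟨v, hv, hvB, hv1, hPT', hind'⟩
    have hPT : PTrans cls J B := (ptrans_split hi₀).mpr ⟨v, hv, hvB, hPT'⟩
    refine ⟨hPT, ?_⟩
    have := (rindep_shift hM hF hv hi₀ hv1 hPT'.1).mpr hind'
    rwa [insert_erase hvB] at this

end SplitLemmas

section Bigf
variable {R : Type} [Field R] [LinearOrder ι]
variable (hM : IsMultimatroid cls r) (hF : Ctx cls J F)
variable {i₀ : ι} {v : U} {B' : Finset U}
include hM hF

lemma bigf_eq (x : U → R) (t : R) (hi₀ : i₀ ∈ J) (hmax : ∀ j ∈ J, j ≤ i₀)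
    (hv : cls v = i₀) (hv1 : RRank r F {v} = 1)
    (hPT' : PTrans cls (J.erase i₀) B') (hind' : RIndep r (insert v F) B') :
    (∏ u ∈ (insert v B').filter (fun u => ¬ RActive cls r J F (insert v B') (cls u)), x u) *
      ∏ u ∈ (insert v B').filter (fun u => RActive cls r J F (insert v B') (cls u)),
        (t * x (RUnder cls r F (insert v B') (cls u) u) /
          (((skewClass cls (cls u)).card : R) - 1) + x u)
    = (if RActive cls r J F (insert v B') i₀ then
        (t * x (RUnder cls r F (insert v B') i₀ v) / (((skewClass cls i₀).card : R) - 1) + x v)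
       else x v) *
      ((∏ u ∈ B'.filter (fun u => ¬ RActive cls r (J.erase i₀) (insert v F) B' (cls u)), x u) *
        ∏ u ∈ B'.filter (fun u => RActive cls r (J.erase i₀) (insert v F) B' (cls u)),
          (t * x (RUnder cls r (insert v F) B' (cls u) u) /
            (((skewClass cls (cls u)).card : R) - 1) + x u)) := by
  have hB' : InJ cls (J.erase i₀) B' := hPT'.1
  have hvB' : v ∉ B' := fun h => (mem_erase.mp (hB'.2 v h)).1 hv
  have hAct : ∀ u ∈ B', (RActive cls r J F (insert v B') (cls u) ↔
      RActive cls r (J.erase i₀) (insert v F) B' (cls u)) := fun u hu =>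
    ractive_shift hM hF hi₀ hmax hv hv1 hB' hind' (hB'.2 u hu)
  have hfil_in : B'.filter (fun u => ¬ RActive cls r J F (insert v B') (cls u))
      = B'.filter (fun u => ¬ RActive cls r (J.erase i₀) (insert v F) B' (cls u)) :=
    filter_congr (fun u hu => by rw [hAct u hu])
  have hfil_ac : B'.filter (fun u => RActive cls r J F (insert v B') (cls u))
      = B'.filter (fun u => RActive cls r (J.erase i₀) (insert v F) B' (cls u)) :=
    filter_congr (fun u hu => by rw [hAct u hu])
  have hprod_ac : ∏ u ∈ B'.filter (fun u => RActive cls r J F (insert v B') (cls u)),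
        (t * x (RUnder cls r F (insert v B') (cls u) u) /
          (((skewClass cls (cls u)).card : R) - 1) + x u)
      = ∏ u ∈ B'.filter (fun u => RActive cls r (J.erase i₀) (insert v F) B' (cls u)),
        (t * x (RUnder cls r (insert v F) B' (cls u) u) /
          (((skewClass cls (cls u)).card : R) - 1) + x u) := by
    rw [hfil_ac]
    refine prod_congr rfl (fun u hu => ?_)
    obtain ⟨huB', hact⟩ := mem_filter.mp hu
    rw [runder_shift hM hF hi₀ hmax hv hv1 hB' hind' (hB'.2 u huB') hact]
  rw [filter_insert, filter_insert]
  by_cases hact : RActive cls r J F (insert v B') i₀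
  · rw [if_pos hact, if_neg (by rw [hv]; exact not_not_intro hact),
      if_pos (by rw [hv]; exact hact)]
    rw [prod_insert (fun h => hvB' (mem_filter.mp h).1)]
    rw [hfil_in, hprod_ac, hv]
    ring
  · rw [if_neg hact, if_pos (by rw [hv]; exact hact), if_neg (by rw [hv]; exact hact)]
    rw [prod_insert (fun h => hvB' (mem_filter.mp h).1)]
    rw [hfil_in, hprod_ac]
    ring

end Bigf

section CaseB
variable {R : Type} [Field R] [LinearOrder ι]
variable (hM : IsMultimatroid cls r) (hF : Ctx cls J F)
variable {i₀ : ι} {v m : U} {B' : Finset U}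

lemma binsert_inJ (hv : cls v = i₀) (hi₀ : i₀ ∈ J) (hB' : InJ cls (J.erase i₀) B') :
    InJ cls J (insert v B') :=
  (hB'.widen (erase_subset _ _)).insert (hv ▸ hi₀)
    (fun w hw hc => (mem_erase.mp (hB'.2 w hw)).1 (by rw [hc, hv]))

include hM hF

lemma caseB_under (hi₀ : i₀ ∈ J) (hmax : ∀ j ∈ J, j ≤ i₀) (hm : cls m = i₀)
    (hm0 : RRank r F {m} = 0) (hv : cls v = i₀) (hv1 : RRank r F {v} = 1)
    (hB' : InJ cls (J.erase i₀) B') (hind' : RIndep r (insert v F) B') (d : U) :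
    RActive cls r J F (insert v B') i₀ ∧ RUnder cls r F (insert v B') i₀ d = m := by
  have hBInJ : InJ cls J (insert v B') := binsert_inJ hv hi₀ hB'
  have hBind : RIndep r F (insert v B') := (rindep_shift hM hF hv hi₀ hv1 hB').mpr hind'
  have hsd : (insert v B') \ skewClass cls i₀ = B' := by
    ext y
    simp only [mem_sdiff, mem_insert, mem_skewClass]
    constructor
    · rintro ⟨rfl | hy, hcy⟩
      · exact absurd hv hcy
      · exact hy
    · intro hy
      exact ⟨Or.inr hy, (mem_erase.mp (hB'.2 y hy)).1⟩
  have hmB' : m ∉ B' := fun h => (mem_erase.mp (hB'.2 m h)).1 hm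
  have hdep : RDep r F (insert m B') := by
    have hkey : r (insert m (B' ∪ F)) = r (B' ∪ F) := caseB_insert_m hM hF hi₀ hm hm0 hB'
    have he : insert m B' ∪ F = insert m (B' ∪ F) := insert_union m B' F
    have hle := RRank_le_card hM hF (hB'.widen (erase_subset _ _))
    have ha := RRank_add hM hF (hB'.widen (erase_subset _ _))
    have hcard : (insert m B').card = B'.card + 1 := card_insert_of_notMem hmB'
    unfold RDep RRank
    rw [he, hkey, hcard]
    omega
  constructor
  · exact (ractive_top hM hF hi₀ hmax hBInJ).mpr ⟨m, hm, hm0⟩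
  · refine runder_eq hM hF hi₀ hBInJ hBind hm ?_
    rw [hsd]
    exact hdep

end CaseB

section Main
variable {R : Type} [Field R] [CharZero R] [LinearOrder ι]

theorem main_expansion (hM : IsMultimatroid cls r) (hnd : Nondegenerate cls)
    (x : U → R) (t : R) :
    ∀ J : Finset ι, ∀ F : Finset U, Ctx cls J F →
      (∑ T ∈ univ.filter (fun T => PTrans cls J T),
        t ^ (T.card - RRank r F T) * ∏ u ∈ T, x u)
      = ∑ B ∈ univ.filter (fun B => RBasis cls r J F B),
          (∏ u ∈ B.filter (fun u => ¬ RActive cls r J F B (cls u)), x u) *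
          ∏ u ∈ B.filter (fun u => RActive cls r J F B (cls u)),
            (t * x (RUnder cls r F B (cls u) u) /
              (((skewClass cls (cls u)).card : R) - 1) + x u) := by
  intro J
  induction J using Finset.strongInduction with
  | _ J ih =>
  intro F hF
  rcases J.eq_empty_or_nonempty with rfl | hJne
  · have hfil1 : univ.filter (fun T => PTrans cls (∅ : Finset ι) T) = {(∅ : Finset U)} := by
      ext T
      simp only [mem_filter, mem_univ, true_and, mem_singleton]
      constructor
      · rintro ⟨⟨-, hcls⟩, -⟩
        rw [eq_empty_iff_forall_notMem]
        intro u hu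
        simpa using hcls u hu
      · rintro rfl
        exact ⟨⟨by intro a ha; simp at ha, by simp⟩, by simp⟩
    have hind : RIndep r F (∅ : Finset U) := by
      unfold RIndep
      rw [RRank_empty hM hF]
      simp
    have hfil2 : univ.filter (fun B => RBasis cls r (∅ : Finset ι) F B)
        = {(∅ : Finset U)} := by
      ext B
      simp only [mem_filter, mem_univ, true_and, mem_singleton]
      constructor
      · rintro ⟨⟨⟨-, hcls⟩, -⟩, -⟩
        rw [eq_empty_iff_forall_notMem]
        intro u hu
        simpa using hcls u hu
      · rintro rfl
        exact ⟨⟨⟨by intro a ha; simp at ha, by simp⟩, by simp⟩, hind⟩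
    rw [hfil1, hfil2, sum_singleton, sum_singleton]
    rw [RRank_empty hM hF]
    simp
  · -- inductive step
    have hi₀mem : J.max' hJne ∈ J := J.max'_mem hJne
    set i₀ := J.max' hJne with hi₀def
    have hmax : ∀ j ∈ J, j ≤ i₀ := fun j hj => J.le_max' j hj
    set J' := J.erase i₀ with hJ'def
    have hJ'ss : J' ⊂ J := erase_ssubset hi₀mem
    -- split the left-hand side
    rw [sum_split cls i₀ (fun T => PTrans cls J T) (fun v T' => PTrans cls J' T') _
      (fun T => ptrans_split hi₀mem)
      (fun v T' hv hP' h => (mem_erase.mp (hP'.1.2 v h)).1 hv)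
      (fun v T' hv hP' u hu hc => (mem_erase.mp (hP'.1.2 u hu)).1 hc)]
    -- split the right-hand side
    rw [sum_split cls i₀ (fun B => RBasis cls r J F B)
      (fun v B' => RBasisV cls r J' F v B')
      (fun B => (∏ u ∈ B.filter (fun u => ¬ RActive cls r J F B (cls u)), x u) *
          ∏ u ∈ B.filter (fun u => RActive cls r J F B (cls u)),
            (t * x (RUnder cls r F B (cls u) u) /
              (((skewClass cls (cls u)).card : R) - 1) + x u))
      (fun B => basis_split hM hF hi₀mem)
      (fun v B' hv hP' h => (mem_erase.mp (hP'.2.1.1.2 v h)).1 hv)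
      (fun v B' hv hP' u hu hc => (mem_erase.mp (hP'.2.1.1.2 u hu)).1 hc)]
    by_cases hsing : ∃ m, cls m = i₀ ∧ RRank r F {m} = 0
    · -- Case B : the top class contains a singular element m
      obtain ⟨m, hm, hm0⟩ := hsing
      have hmmem : m ∈ skewClass cls i₀ := mem_skewClass.mpr hm
      have hc2 : 2 ≤ (skewClass cls i₀).card := hnd i₀
      have hcne : (((skewClass cls i₀).card : R) - 1) ≠ 0 := by
        have : ((skewClass cls i₀).card : R) ≠ 1 := by
          exact_mod_cast (by omega : (skewClass cls i₀).card ≠ 1)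
        exact sub_ne_zero_of_ne this
      have hrinv : ∀ v, cls v = i₀ → ∀ S, InJ cls (J.erase i₀) S →
          RRank r (insert v F) S = RRank r F S :=
        fun v hv S hS => caseB_rank_shift hM hF hi₀mem hm hm0 hv hS
      -- the common value L0
      have hIH : ∀ v, cls v = i₀ →
          (∑ B' ∈ univ.filter (fun B' => RBasis cls r (J.erase i₀) (insert v F) B'),
            (∏ u ∈ B'.filter
                (fun u => ¬ RActive cls r (J.erase i₀) (insert v F) B' (cls u)), x u) *
              ∏ u ∈ B'.filter
                  (fun u => RActive cls r (J.erase i₀) (insert v F) B' (cls u)),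
                (t * x (RUnder cls r (insert v F) B' (cls u) u) /
                  (((skewClass cls (cls u)).card : R) - 1) + x u))
          = ∑ T' ∈ univ.filter (fun T' => PTrans cls (J.erase i₀) T'),
              t ^ (T'.card - RRank r F T') * ∏ u ∈ T', x u := by
        intro v hv
        rw [← ih (J.erase i₀) hJ'ss (insert v F) (ctx_shift hF hv hi₀mem)]
        refine sum_congr rfl (fun T' hT' => ?_)
        have hPT' : PTrans cls (J.erase i₀) T' := (mem_filter.mp hT').2
        rw [hrinv v hv T' hPT'.1]
      -- the left-hand side
      have hInner : ∀ v ∈ skewClass cls i₀,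
          (∑ T' ∈ univ.filter (fun T' => PTrans cls J' T'),
            t ^ ((insert v T').card - RRank r F (insert v T')) * ∏ u ∈ insert v T', x u)
          = x v * t ^ (1 - RRank r F {v}) *
            ∑ T' ∈ univ.filter (fun T' => PTrans cls (J.erase i₀) T'),
              t ^ (T'.card - RRank r F T') * ∏ u ∈ T', x u := by
        intro v hvmem
        have hv : cls v = i₀ := mem_skewClass.mp hvmem
        have hctx' : Ctx cls (J.erase i₀) (insert v F) := ctx_shift hF hv hi₀mem
        rw [mul_assoc, mul_sum, mul_sum]
        refine sum_congr rfl (fun T' hT' => ?_)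
        have hPT' : PTrans cls (J.erase i₀) T' := (mem_filter.mp hT').2
        have hvT' : v ∉ T' := fun h => (mem_erase.mp (hPT'.1.2 v h)).1 hv
        have hcard : (insert v T').card = T'.card + 1 := card_insert_of_notMem hvT'
        have hsplit := RRank_insert_split hM hF (hPT'.1.widen (erase_subset _ _))
          (hv ▸ hi₀mem) (fun u hu hc => (mem_erase.mp (hPT'.1.2 u hu)).1 (by rw [hc, hv]))
        have hb := RRank_le_card hM hctx' hPT'.1
        have ha := rrank_singleton_le hM hF (hv ▸ hi₀mem)
        have hrw := hrinv v hv T' hPT'.1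
        have hb' : RRank r F T' ≤ T'.card := by rw [← hrw]; exact hb
        have hexp : (insert v T').card - RRank r F (insert v T')
            = (1 - RRank r F {v}) + (T'.card - RRank r F T') := by
          rw [hcard, hsplit, hrw]
          omega
        rw [hexp, pow_add, prod_insert hvT']
        ring
      rw [sum_congr rfl hInner]
      -- the right-hand side, v ≠ m
      have hRHSv : ∀ v ∈ (skewClass cls i₀).erase m,
          (∑ B' ∈ univ.filter (fun B' => RBasisV cls r J' F v B'),
            (∏ u ∈ (insert v B').filter
                (fun u => ¬ RActive cls r J F (insert v B') (cls u)), x u) *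
              ∏ u ∈ (insert v B').filter
                  (fun u => RActive cls r J F (insert v B') (cls u)),
                (t * x (RUnder cls r F (insert v B') (cls u) u) /
                  (((skewClass cls (cls u)).card : R) - 1) + x u))
          = (t * x m / (((skewClass cls i₀).card : R) - 1) + x v) *
            ∑ T' ∈ univ.filter (fun T' => PTrans cls (J.erase i₀) T'),
              t ^ (T'.card - RRank r F T') * ∏ u ∈ T', x u := by
        intro v hvmem'
        obtain ⟨hvm, hvmem⟩ := mem_erase.mp hvmem'
        have hv : cls v = i₀ := mem_skewClass.mp hvmem
        have hv1 : RRank r F {v} = 1 :=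
          nonsingular_rrank_one hM hF hi₀mem hm hv hm0 hvm
        have hfil : univ.filter (fun B' => RBasisV cls r J' F v B')
            = univ.filter (fun B' => RBasis cls r (J.erase i₀) (insert v F) B') := by
          refine filter_congr (fun B' _ => ?_)
          unfold RBasisV RBasis
          simp [hv1, hJ'def]
        rw [hfil, ← hIH v hv, mul_sum]
        refine sum_congr rfl (fun B' hB'mem => ?_)
        obtain ⟨hPT', hind'⟩ := (mem_filter.mp hB'mem).2
        obtain ⟨hact, hund⟩ :=
          caseB_under hM hF hi₀mem hmax hm hm0 hv hv1 hPT'.1 hind' v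
        rw [bigf_eq hM hF x t hi₀mem hmax hv hv1 hPT' hind', if_pos hact, hund]
      -- the right-hand side at m is zero
      have hRHSm : (∑ B' ∈ univ.filter (fun B' => RBasisV cls r J' F m B'),
            (∏ u ∈ (insert m B').filter
                (fun u => ¬ RActive cls r J F (insert m B') (cls u)), x u) *
              ∏ u ∈ (insert m B').filter
                  (fun u => RActive cls r J F (insert m B') (cls u)),
                (t * x (RUnder cls r F (insert m B') (cls u) u) /
                  (((skewClass cls (cls u)).card : R) - 1) + x u)) = 0 := by
        have : univ.filter (fun B' => RBasisV cls r J' F m B') = ∅ := by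
          refine filter_false_of_mem (fun B' _ hP => ?_)
          have h1 : RRank r F {m} = 1 := hP.1
          omega
        rw [this, sum_empty]
      rw [← Finset.add_sum_erase _ _ hmmem, ← Finset.add_sum_erase _ _ hmmem, hRHSm,
        sum_congr rfl hRHSv, hm0, zero_add]
      have hrest : ∀ v ∈ (skewClass cls i₀).erase m,
          x v * t ^ (1 - RRank r F {v}) *
            (∑ T' ∈ univ.filter (fun T' => PTrans cls (J.erase i₀) T'),
              t ^ (T'.card - RRank r F T') * ∏ u ∈ T', x u)
          = x v * ∑ T' ∈ univ.filter (fun T' => PTrans cls (J.erase i₀) T'),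
              t ^ (T'.card - RRank r F T') * ∏ u ∈ T', x u := by
        intro v hvmem'
        obtain ⟨hvm, hvmem⟩ := mem_erase.mp hvmem'
        have hv : cls v = i₀ := mem_skewClass.mp hvmem
        have hv1 : RRank r F {v} = 1 :=
          nonsingular_rrank_one hM hF hi₀mem hm hv hm0 hvm
        rw [hv1]
        simp
      rw [sum_congr rfl hrest]
      -- final algebra
      set L0 := ∑ T' ∈ univ.filter (fun T' => PTrans cls (J.erase i₀) T'),
          t ^ (T'.card - RRank r F T') * ∏ u ∈ T', x u with hL0def
      have hexpand : ∀ v ∈ (skewClass cls i₀).erase m,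
          (t * x m / (((skewClass cls i₀).card : R) - 1) + x v) * L0
          = t * x m / (((skewClass cls i₀).card : R) - 1) * L0 + x v * L0 := by
        intro v _
        ring
      rw [sum_congr rfl hexpand, sum_add_distrib, sum_const, card_erase_of_mem hmmem,
        nsmul_eq_mul]
      rw [Nat.cast_sub (by omega : 1 ≤ (skewClass cls i₀).card), Nat.cast_one]
      have : (((skewClass cls i₀).card : R) - 1) *
          (t * x m / (((skewClass cls i₀).card : R) - 1) * L0) = t * x m * L0 := by
        field_simp
      rw [this]
      rw [pow_one]
      ring
    · -- Case A : no singular element in the top class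
      push_neg at hsing
      refine sum_congr rfl (fun v hvmem => ?_)
      have hv : cls v = i₀ := mem_skewClass.mp hvmem
      have hv1 : RRank r F {v} = 1 := by
        have hle := rrank_singleton_le hM hF (hv ▸ hi₀mem)
        have := hsing v hv
        omega
      have hctx' : Ctx cls J' (insert v F) := ctx_shift hF hv hi₀mem
      have hLinner : ∑ T' ∈ univ.filter (fun T' => PTrans cls J' T'),
            t ^ ((insert v T').card - RRank r F (insert v T')) * ∏ u ∈ insert v T', x u
          = x v * ∑ T' ∈ univ.filter (fun T' => PTrans cls J' T'),
              t ^ (T'.card - RRank r (insert v F) T') * ∏ u ∈ T', x u := by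
        rw [mul_sum]
        refine sum_congr rfl (fun T' hT' => ?_)
        have hPT' : PTrans cls J' T' := (mem_filter.mp hT').2
        have hvT' : v ∉ T' := fun h => (mem_erase.mp (hPT'.1.2 v h)).1 hv
        have hcard : (insert v T').card = T'.card + 1 := card_insert_of_notMem hvT'
        have hrr : RRank r F (insert v T') = 1 + RRank r (insert v F) T' :=
          rrank_shift hM hF hv hi₀mem hv1 hPT'.1
        have hb := RRank_le_card hM hctx' hPT'.1
        have hexp : (insert v T').card - RRank r F (insert v T')
            = T'.card - RRank r (insert v F) T' := by omega
        rw [hexp, prod_insert hvT']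
        ring
      rw [hLinner, ih J' hJ'ss (insert v F) hctx']
      have hfil : univ.filter (fun B' => RBasisV cls r J' F v B')
          = univ.filter (fun B' => RBasis cls r J' (insert v F) B') := by
        refine filter_congr (fun B' _ => ?_)
        unfold RBasisV RBasis
        simp [hv1]
      rw [hfil, mul_sum]
      refine sum_congr rfl (fun B' hB'mem => ?_)
      obtain ⟨hPT', hind'⟩ := (mem_filter.mp hB'mem).2
      have hBInJ : InJ cls J (insert v B') := binsert_inJ hv hi₀mem hPT'.1
      have hnotact : ¬ RActive cls r J F (insert v B') i₀ := by
        intro h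
        obtain ⟨m, hm, hm0⟩ := (ractive_top hM hF hi₀mem hmax hBInJ).mp h
        exact hsing m hm hm0
      rw [bigf_eq hM hF x t hi₀mem hmax hv hv1 hPT' hind']
      rw [if_neg hnotact]
end Main

section Final
variable [LinearOrder ι]
variable (hM : IsMultimatroid cls r)

lemma ctx_univ : Ctx cls (univ : Finset ι) (∅ : Finset U) := by
  refine ⟨?_, ?_, ?_⟩
  · intro a ha; simp at ha
  · intro u hu; simp at hu
  · intro i hi; simp at hi

include hM

lemma rrank_emptyF (S : Finset U) : RRank r (∅ : Finset U) S = r S := by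
  unfold RRank
  rw [union_empty, r_empty hM, Nat.sub_zero]

lemma ptrans_univ {T : Finset U} : PTrans cls (univ : Finset ι) T ↔ Transversal cls T := by
  unfold PTrans InJ Transversal
  constructor
  · rintro ⟨⟨h1, -⟩, h2⟩
    exact ⟨h1, fun i => h2 i (mem_univ i)⟩
  · rintro ⟨h1, h2⟩
    exact ⟨⟨h1, fun u _ => mem_univ _⟩, fun i _ => h2 i⟩

lemma circuit_iff {C : Finset U} : Circuit cls r C ↔ RCirc cls r (univ : Finset ι) ∅ C := by
  unfold Circuit RCirc InJ RDep RIndep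
  constructor
  · rintro ⟨hsub, hdep, hmin⟩
    refine ⟨⟨hsub, fun u _ => mem_univ _⟩, ?_, ?_⟩
    · rw [rrank_emptyF hM]; exact hdep
    · intro D hD
      have h1 := hmin D hD
      have h2 := hM.rank_le_card D (subtrans_subset hsub hD.subset)
      rw [rrank_emptyF hM]
      omega
  · rintro ⟨⟨hsub, -⟩, hdep, hmin⟩
    rw [rrank_emptyF hM] at hdep
    refine ⟨hsub, hdep, ?_⟩
    intro D hD
    have h1 := hmin D hD
    rw [rrank_emptyF hM] at h1
    omega

lemma active_iff {T : Finset U} {i : ι} :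
    Active cls r T i ↔ RActive cls r (univ : Finset ι) ∅ T i := by
  unfold Active RActive
  constructor <;> rintro ⟨C, hC, h1, h2⟩
  · exact ⟨C, (circuit_iff hM).mp hC, h1, h2⟩
  · exact ⟨C, (circuit_iff hM).mpr hC, h1, h2⟩

lemma mmbasis_iff (hnd : Nondegenerate cls) {B : Finset U} :
    MMBasis cls r B ↔ RBasis cls r (univ : Finset ι) ∅ B := by
  unfold MMBasis Indep RBasis PTrans InJ RIndep
  constructor
  · rintro ⟨⟨hsub, hrank⟩, hmaxim⟩
    refine ⟨⟨⟨hsub, fun u _ => mem_univ _⟩, ?_⟩, ?_⟩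
    · -- B is a transversal
      intro i _
      by_contra hcon
      push_neg at hcon
      obtain ⟨a, ha, b, hb, hab⟩ : ∃ a ∈ skewClass cls i, ∃ b ∈ skewClass cls i, a ≠ b := by
        have h2 := hnd i
        obtain ⟨a, ha, b, hb, hab⟩ :=
          Finset.one_lt_card.mp (show 1 < (skewClass cls i).card by omega)
        exact ⟨a, ha, b, hb, hab⟩
      rw [mem_skewClass] at ha hb
      have hclsB : ∀ u ∈ B, cls u ≠ cls a := by
        intro u hu hc
        exact hcon u hu (by rw [hc, ha])
      have hR2 := hM.axiomR2 B a b hsub (ha.trans hb.symm) hab hclsB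
      have haB : a ∉ B := fun h => hclsB a h rfl
      have hbB : b ∉ B := fun h => hclsB b h (hb.trans ha.symm)
      have hsa : Subtransversal cls (insert a B) :=
        subtrans_insert hsub (fun u hu => hclsB u hu)
      have hsb : Subtransversal cls (insert b B) :=
        subtrans_insert hsub (fun u hu hc => hclsB u hu (hc.trans (hb.trans ha.symm)))
      have hla := hM.rank_le_card _ hsa
      have hlb := hM.rank_le_card _ hsb
      rw [card_insert_of_notMem haB] at hla
      rw [card_insert_of_notMem hbB] at hlb
      have : r (insert a B) = B.card + 1 ∨ r (insert b B) = B.card + 1 := by omega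
      rcases this with h | h
      · have := hmaxim (insert a B) ⟨hsa, by rw [h, card_insert_of_notMem haB]⟩
          (subset_insert _ _)
        exact haB (this ▸ mem_insert_self a B)
      · have := hmaxim (insert b B) ⟨hsb, by rw [h, card_insert_of_notMem hbB]⟩
          (subset_insert _ _)
        exact hbB (this ▸ mem_insert_self b B)
    · rw [rrank_emptyF hM]; exact hrank
  · rintro ⟨⟨⟨hsub, -⟩, hcov⟩, hrank⟩
    rw [rrank_emptyF hM] at hrank
    refine ⟨⟨hsub, hrank⟩, ?_⟩
    intro S hS hBS
    by_contra hne
    obtain ⟨u, huS, huB⟩ : ∃ u ∈ S, u ∉ B := by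
      by_contra hcon
      push_neg at hcon
      exact hne (Subset.antisymm hcon hBS)
    obtain ⟨w, hwB, hw⟩ := hcov (cls u) (mem_univ _)
    have : u = w := hS.1 (mem_coe.mpr huS) (mem_coe.mpr (hBS hwB)) hw.symm
    exact huB (this ▸ hwB)

lemma underElt_eq {B : Finset U} {i : ι} {d : U} (hB : RBasis cls r (univ : Finset ι) ∅ B)
    (hact : RActive cls r (univ : Finset ι) ∅ B i) :
    underElt cls r B i d = RUnder cls r ∅ B i d := by
  have hctx := ctx_univ (cls := cls)
  have hBInJ : InJ cls univ B := hB.1.1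
  have hBind : RIndep r ∅ B := hB.2
  obtain ⟨w, hwi, hdep, -⟩ := (ractive_iff hM hctx (mem_univ i) hBInJ hBind).mp hact
  have hrund : RUnder cls r ∅ B i d = w := runder_eq hM hctx (mem_univ i) hBInJ hBind hwi hdep
  set Y := B \ skewClass cls i with hYdef
  have hYInJ : InJ cls univ Y := hBInJ.subset sdiff_subset
  have hYind : RIndep r ∅ Y := hBind.subset_rel hM hctx hBInJ sdiff_subset
  have hYi : ∀ u ∈ Y, cls u ≠ i := fun u hu => by
    have := (mem_sdiff.mp hu).2; rwa [mem_skewClass] at this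
  have hwY : w ∉ Y := fun h => hYi w h hwi
  have hXInJ : InJ cls univ (insert w Y) :=
    hYInJ.insert (mem_univ _) (fun u hu hc => hYi u hu (by rw [hc, hwi]))
  have hspec := fundC_spec hM hctx hXInJ (mem_insert_self w Y)
    (by rw [erase_insert hwY]; exact hYind) hdep
  have hwB : w ∉ B := by
    intro hwB
    have hXB : insert w Y ⊆ B := insert_subset hwB sdiff_subset
    have : RIndep r ∅ (insert w Y) := hBind.subset_rel hM hctx hBInJ hXB
    have h2 := (not_RDep_iff hM hctx hXInJ).mpr this
    exact h2 hdep
  have hex : ∃ x : U, ∃ C, Circuit cls r C ∧ C ⊆ B ∪ skewClass cls i ∧ x ∈ C ∧ x ∉ B := by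
    refine ⟨w, fundC cls r univ ∅ (insert w Y), (circuit_iff hM).mpr hspec.2.1, ?_,
      hspec.2.2.1, hwB⟩
    refine hspec.1.trans ?_
    intro y hy
    rcases mem_insert.mp hy with rfl | hy
    · exact mem_union_right _ (mem_skewClass.mpr hwi)
    · exact mem_union_left _ (sdiff_subset hy)
  rw [underElt, dif_pos hex, hrund]
  obtain ⟨C₀, hC₀, hC₀sub, hx₀C, hx₀B⟩ := hex.choose_spec
  set x₀ := hex.choose with hx₀def
  have hRC₀ := (circuit_iff hM).mp hC₀
  have hx₀skew : x₀ ∈ skewClass cls i := by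
    rcases mem_union.mp (hC₀sub hx₀C) with h | h
    · exact absurd h hx₀B
    · exact h
  have hx₀i : cls x₀ = i := mem_skewClass.mp hx₀skew
  have hC₀X : C₀ ⊆ insert x₀ Y := by
    intro y hy
    by_cases hcy : cls y = i
    · have : y = x₀ := hRC₀.1.1 (mem_coe.mpr hy) (mem_coe.mpr hx₀C) (hcy.trans hx₀i.symm)
      rw [this]; exact mem_insert_self _ _
    · rcases mem_union.mp (hC₀sub hy) with h | h
      · exact mem_insert_of_mem (mem_sdiff.mpr ⟨h, fun hk => hcy (mem_skewClass.mp hk)⟩)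
      · exact absurd (mem_skewClass.mp h) hcy
  have hX₀InJ : InJ cls univ (insert x₀ Y) :=
    hYInJ.insert (mem_univ _) (fun u hu hc => hYi u hu (by rw [hc, hx₀i]))
  have hdep₀ : RDep r ∅ (insert x₀ Y) :=
    hRC₀.2.1.superset_rel hM hctx hX₀InJ hC₀X
  exact attach_unique hM hctx (mem_univ i) hYInJ hYind hYi hx₀i hwi hdep₀ hdep

end Final
end Work

/-- the activities expansion of the weighted transition polynomial of
a non-degenerate multimatroid. The left side is `Q(Z; x, t) = Σ_T t^{n(T)} x_T`;
on the right, products over inactive (resp. active) skew classes are written as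
products over the elements of `B` lying in them. -/

theorem stmt_13 {R : Type} [Field R] [CharZero R]
    [DecidableEq U] [Fintype U] [DecidableEq ι] [Fintype ι] [LinearOrder ι]
    (cls : U → ι) (r : Finset U → ℕ) (hM : IsMultimatroid cls r)
    (hnd : Nondegenerate cls) (x : U → R) (t : R) :
    ∑ T ∈ Finset.univ.filter (fun T : Finset U => Transversal cls T),
        t ^ (T.card - r T) * ∏ u ∈ T, x u
      = ∑ B ∈ Finset.univ.filter (fun B : Finset U => MMBasis cls r B),
          (∏ u ∈ B.filter (fun u => ¬ Active cls r B (cls u)), x u) *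
          ∏ u ∈ B.filter (fun u => Active cls r B (cls u)),
            (t * x (underElt cls r B (cls u) u) /
                (((skewClass cls (cls u)).card : R) - 1) + x u) := by
  classical
  have hctx : Work.Ctx cls (univ : Finset ι) (∅ : Finset U) := Work.ctx_univ
  have hmain := Work.main_expansion hM hnd x t univ ∅ hctx
  have hfalt : univ.filter (fun T : Finset U => Transversal cls T)
      = univ.filter (fun T => Work.PTrans cls univ T) :=
    filter_congr (fun T _ => by rw [Work.ptrans_univ hM])
  have hfbas : univ.filter (fun B : Finset U => MMBasis cls r B)
      = univ.filter (fun B => Work.RBasis cls r univ ∅ B) :=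
    filter_congr (fun B _ => by rw [Work.mmbasis_iff hM hnd])
  calc ∑ T ∈ Finset.univ.filter (fun T : Finset U => Transversal cls T),
        t ^ (T.card - r T) * ∏ u ∈ T, x u
      = ∑ T ∈ univ.filter (fun T => Work.PTrans cls univ T),
          t ^ (T.card - Work.RRank r ∅ T) * ∏ u ∈ T, x u := by
        rw [hfalt]
        exact sum_congr rfl (fun T _ => by rw [Work.rrank_emptyF hM])
    _ = ∑ B ∈ univ.filter (fun B => Work.RBasis cls r univ ∅ B),
          (∏ u ∈ B.filter (fun u => ¬ Work.RActive cls r univ ∅ B (cls u)), x u) *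
          ∏ u ∈ B.filter (fun u => Work.RActive cls r univ ∅ B (cls u)),
            (t * x (Work.RUnder cls r ∅ B (cls u) u) /
              (((skewClass cls (cls u)).card : R) - 1) + x u) := hmain
    _ = ∑ B ∈ Finset.univ.filter (fun B : Finset U => MMBasis cls r B),
          (∏ u ∈ B.filter (fun u => ¬ Active cls r B (cls u)), x u) *
          ∏ u ∈ B.filter (fun u => Active cls r B (cls u)),
            (t * x (underElt cls r B (cls u) u) /
                (((skewClass cls (cls u)).card : R) - 1) + x u) := by
        rw [hfbas]
        refine sum_congr rfl (fun B hBmem => ?_)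
        have hB : Work.RBasis cls r univ ∅ B := (mem_filter.mp hBmem).2
        have hfin : B.filter (fun u => ¬ Work.RActive cls r univ ∅ B (cls u))
            = B.filter (fun u => ¬ Active cls r B (cls u)) :=
          filter_congr (fun u _ => by rw [Work.active_iff hM])
        have hfac : B.filter (fun u => Work.RActive cls r univ ∅ B (cls u))
            = B.filter (fun u => Active cls r B (cls u)) :=
          filter_congr (fun u _ => by rw [Work.active_iff hM])
        rw [hfin, ← hfac]
        congr 1
        refine prod_congr rfl (fun u hu => ?_)
        have hact : Work.RActive cls r univ ∅ B (cls u) := (mem_filter.mp hu).2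
        rw [Work.underElt_eq hM hB hact]
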